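/- arXiv:1904.08274 — 2 statements merged into one kernel-verified Lean document; each statement's English description precedes it below -/
import Mathlib

section
/- Suppose G is a finite set of axis-aligned rectangular cells tiling a region, any two adjacent cells of G sharing a full common edge (aligned-adjacency), and G is connected under aligned-adjacency. Then no interior vertex of the union of G lying on an edge between two cells of G is a T-vertex, i.e., every interior vertex on a shared edge is a corner of all cells of G containing it. -/
/-- An axis-aligned rectangle [x1,x2] × [y1,y2]. -/
structure Rect where
  x1 : ℝ
  x2 : ℝ
  y1 : ℝ
  y2 : ℝ

namespace Rect

def toSet (R : Rect) : Set (ℝ × ℝ) := Set.Icc R.x1 R.x2 ×ˢ Set.Icc R.y1 R.y2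

def Valid (R : Rect) : Prop := R.x1 < R.x2 ∧ R.y1 < R.y2

def IsCorner (R : Rect) (v : ℝ × ℝ) : Prop :=
  (v.1 = R.x1 ∨ v.1 = R.x2) ∧ (v.2 = R.y1 ∨ v.2 = R.y2)

end Rect

/-- Two rectangles are aligned-adjacent if they share exactly one full common edge:
they abut horizontally with identical vertical extent, or vertically with identical
horizontal extent. -/
def AlignedAdj (R S : Rect) : Prop :=
  (R.x2 = S.x1 ∧ R.y1 = S.y1 ∧ R.y2 = S.y2) ∨
  (S.x2 = R.x1 ∧ R.y1 = S.y1 ∧ R.y2 = S.y2) ∨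
  (R.y2 = S.y1 ∧ R.x1 = S.x1 ∧ R.x2 = S.x2) ∨
  (S.y2 = R.y1 ∧ R.x1 = S.x1 ∧ R.x2 = S.x2)

lemma Rect.mem_toSet {R : Rect} {p : ℝ × ℝ} :
    p ∈ R.toSet ↔ (R.x1 ≤ p.1 ∧ p.1 ≤ R.x2) ∧ (R.y1 ≤ p.2 ∧ p.2 ≤ R.y2) := by
  rw [Rect.toSet, Set.mem_prod, Set.mem_Icc, Set.mem_Icc]

lemma Rect.mem_interior {R : Rect} {p : ℝ × ℝ} :
    p ∈ interior R.toSet ↔ (R.x1 < p.1 ∧ p.1 < R.x2) ∧ (R.y1 < p.2 ∧ p.2 < R.y2) := by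
  rw [Rect.toSet, interior_prod_eq, interior_Icc]
  simp [Set.mem_prod]

lemma Rect.isClosed (R : Rect) : IsClosed R.toSet :=
  IsClosed.prod isClosed_Icc isClosed_Icc

lemma ioo_inter {a1 a2 b1 b2 : ℝ} (h1 : a1 < a2) (h2 : a1 < b2) (h3 : b1 < a2)
    (h4 : b1 < b2) : ∃ x, a1 < x ∧ x < a2 ∧ b1 < x ∧ x < b2 := by
  refine ⟨(max a1 b1 + min a2 b2) / 2, ?_, ?_, ?_, ?_⟩ <;>
  · have hm := le_max_left a1 b1
    have hm' := le_max_right a1 b1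
    have hn := min_le_left a2 b2
    have hn' := min_le_right a2 b2
    have key : max a1 b1 < min a2 b2 := max_lt (lt_min h1 h2) (lt_min h3 h4)
    linarith

lemma exists_cell_near (G : Finset Rect) (v w : ℝ × ℝ) (hw1 : |w.1| ≤ 1) (hw2 : |w.2| ≤ 1)
    (hint : v ∈ interior (⋃ R ∈ G, R.toSet)) (ε : ℝ) (hε : 0 < ε) :
    ∃ T ∈ G, v ∈ T.toSet ∧ ∃ t : ℝ, 0 < t ∧ t ≤ ε ∧
      (v.1 + t * w.1, v.2 + t * w.2) ∈ T.toSet := by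
  classical
  set K : Set (ℝ × ℝ) := ⋃ T ∈ G.filter (fun T => v ∉ T.toSet), T.toSet with hK
  have hKc : IsClosed K :=
    Set.Finite.isClosed_biUnion (G.filter _).finite_toSet (fun T _ => T.isClosed)
  have hvK : v ∉ K := by
    simp only [hK, Set.mem_iUnion]
    rintro ⟨T, hT, hvT⟩
    simp only [Finset.mem_filter] at hT
    exact hT.2 hvT
  obtain ⟨δ, hδ, hball⟩ := Metric.mem_nhds_iff.mp (hKc.isOpen_compl.mem_nhds hvK)
  obtain ⟨ε', hε', hball'⟩ := Metric.mem_nhds_iff.mp (mem_interior_iff_mem_nhds.mp hint)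
  set t : ℝ := min ε (min δ ε' / 2) with ht
  have ht0 : 0 < t := lt_min hε (by positivity)
  have htδ : t < δ := by
    have h1 : t ≤ min δ ε' / 2 := min_le_right _ _
    have h2 : min δ ε' ≤ δ := min_le_left _ _
    linarith
  have htε' : t < ε' := by
    have h1 : t ≤ min δ ε' / 2 := min_le_right _ _
    have h2 : min δ ε' ≤ ε' := min_le_right _ _
    linarith
  set p : ℝ × ℝ := (v.1 + t * w.1, v.2 + t * w.2) with hp
  have hd : dist p v ≤ t := by
    rw [Prod.dist_eq]
    have e1 : p.1 - v.1 = t * w.1 := by simp [hp]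
    have e2 : p.2 - v.2 = t * w.2 := by simp [hp]
    have d1 : dist p.1 v.1 ≤ t := by
      rw [Real.dist_eq, e1, abs_mul, abs_of_pos ht0]; nlinarith
    have d2 : dist p.2 v.2 ≤ t := by
      rw [Real.dist_eq, e2, abs_mul, abs_of_pos ht0]; nlinarith
    exact max_le d1 d2
  have hpU : p ∈ ⋃ R ∈ G, R.toSet := by
    exact hball' (Metric.mem_ball.mpr (lt_of_le_of_lt hd htε'))
  simp only [Set.mem_iUnion] at hpU
  obtain ⟨T, hTG, hpT⟩ := hpU
  refine ⟨T, hTG, ?_, t, ht0, min_le_left _ _, hpT⟩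
  by_contra hvT
  have : p ∈ K := by
    simp only [hK, Set.mem_iUnion]
    exact ⟨T, Finset.mem_filter.mpr ⟨hTG, hvT⟩, hpT⟩
  exact hball (Metric.mem_ball.mpr (lt_of_le_of_lt hd htδ)) this


lemma top_case (G : Finset Rect)
    (hvalid : ∀ R ∈ G, R.Valid)
    (hdisj : ∀ R ∈ G, ∀ S ∈ G, R ≠ S → interior R.toSet ∩ interior S.toSet = ∅)
    (hadj : ∀ R ∈ G, ∀ S ∈ G, R ≠ S → (R.toSet ∩ S.toSet).Infinite → AlignedAdj R S)
    (v : ℝ × ℝ) (hint : v ∈ interior (⋃ R ∈ G, R.toSet))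
    (S : Rect) (hSG : S ∈ G) (hSx1 : S.x1 < v.1) (hSx2 : v.1 < S.x2) (hSy : v.2 = S.y2)
    (R : Rect) (hRG : R ∈ G) (hRy : v.2 = R.y1) (hRx : v.1 = R.x1 ∨ v.1 = R.x2) : False := by
  obtain ⟨hSxv, hSyv⟩ := hvalid S hSG
  obtain ⟨hRxv, hRyv⟩ := hvalid R hRG
  obtain ⟨T, hTG, hvT, t, ht0, -, hpT⟩ :=
    exists_cell_near G v (0, 1) (by norm_num) (by norm_num) hint 1 one_pos
  obtain ⟨hTxv, hTyv⟩ := hvalid T hTG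
  rw [Rect.mem_toSet] at hvT hpT
  simp only [mul_zero, mul_one, add_zero] at hpT
  have hTx1 : T.x1 ≤ v.1 := hvT.1.1
  have hTx2 : v.1 ≤ T.x2 := hvT.1.2
  have hTy1 : T.y1 ≤ v.2 := hvT.2.1
  have hTy2 : v.2 + t ≤ T.y2 := hpT.2.2
  have hTS : T ≠ S := by rintro rfl; linarith
  have hTy : T.y1 = v.2 := by
    by_contra h
    have h' : T.y1 < v.2 := lt_of_le_of_ne hTy1 h
    obtain ⟨x0, hxa, hxb, hxc, hxd⟩ :=
      ioo_inter (a1 := T.x1) (a2 := T.x2) (b1 := S.x1) (b2 := S.x2)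
        hTxv (by linarith) (by linarith) hSxv
    obtain ⟨y0, hya, hyb, hyc, hyd⟩ :=
      ioo_inter (a1 := T.y1) (a2 := T.y2) (b1 := S.y1) (b2 := S.y2)
        hTyv (by linarith) (by linarith) hSyv
    have hd := hdisj T hTG S hSG hTS
    rw [Set.eq_empty_iff_forall_notMem] at hd
    exact hd (x0, y0) ⟨Rect.mem_interior.mpr ⟨⟨hxa, hxb⟩, hya, hyb⟩,
      Rect.mem_interior.mpr ⟨⟨hxc, hxd⟩, hyc, hyd⟩⟩
  have hinf : (T.toSet ∩ S.toSet).Infinite := by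
    have hab : max T.x1 S.x1 < min T.x2 S.x2 :=
      max_lt (lt_min hTxv (by linarith)) (lt_min (by linarith) hSxv)
    have himg : ((fun x => (x, v.2)) '' Set.Icc (max T.x1 S.x1) (min T.x2 S.x2)).Infinite := by
      apply Set.Infinite.image
      · intro a _ b _ hab'
        simpa using hab'
      · exact Set.Icc_infinite hab
    apply himg.mono
    rintro p ⟨x, hx, rfl⟩
    have h1 : T.x1 ≤ x := le_trans (le_max_left _ _) hx.1
    have h2 : S.x1 ≤ x := le_trans (le_max_right _ _) hx.1
    have h3 : x ≤ T.x2 := le_trans hx.2 (min_le_left _ _)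
    have h4 : x ≤ S.x2 := le_trans hx.2 (min_le_right _ _)
    exact ⟨Rect.mem_toSet.mpr ⟨⟨h1, h3⟩, by simp; constructor <;> linarith⟩,
      Rect.mem_toSet.mpr ⟨⟨h2, h4⟩, by simp; constructor <;> linarith⟩⟩
  rcases hadj T hTG S hSG hTS hinf with ⟨h1, h2, h3⟩ | ⟨h1, h2, h3⟩ | ⟨h1, h2, h3⟩ | ⟨h1, h2, h3⟩
  · linarith
  · linarith
  · linarith
  · -- S.y2 = T.y1, T.x1 = S.x1, T.x2 = S.x2
    have hRT : R ≠ T := by rintro rfl; rcases hRx with h | h <;> linarith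
    have hA : R.x1 < T.x2 := by rcases hRx with h | h <;> linarith
    have hB : T.x1 < R.x2 := by rcases hRx with h | h <;> linarith
    obtain ⟨x0, hxa, hxb, hxc, hxd⟩ :=
      ioo_inter (a1 := R.x1) (a2 := R.x2) (b1 := T.x1) (b2 := T.x2) hRxv hA hB hTxv
    obtain ⟨y0, hya, hyb, hyc, hyd⟩ :=
      ioo_inter (a1 := R.y1) (a2 := R.y2) (b1 := T.y1) (b2 := T.y2)
        hRyv (by linarith) (by linarith) hTyv
    have hd := hdisj R hRG T hTG hRT
    rw [Set.eq_empty_iff_forall_notMem] at hd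
    exact hd (x0, y0) ⟨Rect.mem_interior.mpr ⟨⟨hxa, hxb⟩, hya, hyb⟩,
      Rect.mem_interior.mpr ⟨⟨hxc, hxd⟩, hyc, hyd⟩⟩

lemma bottom_case (G : Finset Rect)
    (hvalid : ∀ R ∈ G, R.Valid)
    (hdisj : ∀ R ∈ G, ∀ S ∈ G, R ≠ S → interior R.toSet ∩ interior S.toSet = ∅)
    (hadj : ∀ R ∈ G, ∀ S ∈ G, R ≠ S → (R.toSet ∩ S.toSet).Infinite → AlignedAdj R S)
    (v : ℝ × ℝ) (hint : v ∈ interior (⋃ R ∈ G, R.toSet))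
    (S : Rect) (hSG : S ∈ G) (hSx1 : S.x1 < v.1) (hSx2 : v.1 < S.x2) (hSy : v.2 = S.y1)
    (R : Rect) (hRG : R ∈ G) (hRy : v.2 = R.y2) (hRx : v.1 = R.x1 ∨ v.1 = R.x2) : False := by
  obtain ⟨hSxv, hSyv⟩ := hvalid S hSG
  obtain ⟨hRxv, hRyv⟩ := hvalid R hRG
  obtain ⟨T, hTG, hvT, t, ht0, -, hpT⟩ :=
    exists_cell_near G v (0, -1) (by norm_num) (by norm_num) hint 1 one_pos
  obtain ⟨hTxv, hTyv⟩ := hvalid T hTG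
  rw [Rect.mem_toSet] at hvT hpT
  have hTx1 : T.x1 ≤ v.1 := hvT.1.1
  have hTx2 : v.1 ≤ T.x2 := hvT.1.2
  have hTy2 : v.2 ≤ T.y2 := hvT.2.2
  have hTy1 : T.y1 ≤ v.2 - t := by have := hpT.2.1; simp only at this; linarith
  have hTS : T ≠ S := by rintro rfl; linarith
  have hTy : T.y2 = v.2 := by
    by_contra h
    have h' : v.2 < T.y2 := lt_of_le_of_ne hTy2 (fun h'' => h h''.symm)
    obtain ⟨x0, hxa, hxb, hxc, hxd⟩ :=
      ioo_inter (a1 := T.x1) (a2 := T.x2) (b1 := S.x1) (b2 := S.x2)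
        hTxv (by linarith) (by linarith) hSxv
    obtain ⟨y0, hya, hyb, hyc, hyd⟩ :=
      ioo_inter (a1 := T.y1) (a2 := T.y2) (b1 := S.y1) (b2 := S.y2)
        hTyv (by linarith) (by linarith) hSyv
    have hd := hdisj T hTG S hSG hTS
    rw [Set.eq_empty_iff_forall_notMem] at hd
    exact hd (x0, y0) ⟨Rect.mem_interior.mpr ⟨⟨hxa, hxb⟩, hya, hyb⟩,
      Rect.mem_interior.mpr ⟨⟨hxc, hxd⟩, hyc, hyd⟩⟩
  have hinf : (T.toSet ∩ S.toSet).Infinite := by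
    have hab : max T.x1 S.x1 < min T.x2 S.x2 :=
      max_lt (lt_min hTxv (by linarith)) (lt_min (by linarith) hSxv)
    have himg : ((fun x => (x, v.2)) '' Set.Icc (max T.x1 S.x1) (min T.x2 S.x2)).Infinite := by
      apply Set.Infinite.image
      · intro a _ b _ hab'
        simpa using hab'
      · exact Set.Icc_infinite hab
    apply himg.mono
    rintro p ⟨x, hx, rfl⟩
    have h1 : T.x1 ≤ x := le_trans (le_max_left _ _) hx.1
    have h2 : S.x1 ≤ x := le_trans (le_max_right _ _) hx.1
    have h3 : x ≤ T.x2 := le_trans hx.2 (min_le_left _ _)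
    have h4 : x ≤ S.x2 := le_trans hx.2 (min_le_right _ _)
    exact ⟨Rect.mem_toSet.mpr ⟨⟨h1, h3⟩, by simp; constructor <;> linarith⟩,
      Rect.mem_toSet.mpr ⟨⟨h2, h4⟩, by simp; constructor <;> linarith⟩⟩
  rcases hadj T hTG S hSG hTS hinf with ⟨h1, h2, h3⟩ | ⟨h1, h2, h3⟩ | ⟨h1, h2, h3⟩ | ⟨h1, h2, h3⟩
  · linarith
  · linarith
  · -- T.y2 = S.y1, T.x1 = S.x1, T.x2 = S.x2
    have hRT : R ≠ T := by rintro rfl; rcases hRx with h | h <;> linarith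
    have hA : R.x1 < T.x2 := by rcases hRx with h | h <;> linarith
    have hB : T.x1 < R.x2 := by rcases hRx with h | h <;> linarith
    obtain ⟨x0, hxa, hxb, hxc, hxd⟩ :=
      ioo_inter (a1 := R.x1) (a2 := R.x2) (b1 := T.x1) (b2 := T.x2) hRxv hA hB hTxv
    obtain ⟨y0, hya, hyb, hyc, hyd⟩ :=
      ioo_inter (a1 := R.y1) (a2 := R.y2) (b1 := T.y1) (b2 := T.y2)
        hRyv (by linarith) (by linarith) hTyv
    have hd := hdisj R hRG T hTG hRT
    rw [Set.eq_empty_iff_forall_notMem] at hd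
    exact hd (x0, y0) ⟨Rect.mem_interior.mpr ⟨⟨hxa, hxb⟩, hya, hyb⟩,
      Rect.mem_interior.mpr ⟨⟨hxc, hxd⟩, hyc, hyd⟩⟩
  · linarith

lemma right_case (G : Finset Rect)
    (hvalid : ∀ R ∈ G, R.Valid)
    (hdisj : ∀ R ∈ G, ∀ S ∈ G, R ≠ S → interior R.toSet ∩ interior S.toSet = ∅)
    (hadj : ∀ R ∈ G, ∀ S ∈ G, R ≠ S → (R.toSet ∩ S.toSet).Infinite → AlignedAdj R S)
    (v : ℝ × ℝ) (hint : v ∈ interior (⋃ R ∈ G, R.toSet))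
    (S : Rect) (hSG : S ∈ G) (hSy1 : S.y1 < v.2) (hSy2 : v.2 < S.y2) (hSx : v.1 = S.x2)
    (R : Rect) (hRG : R ∈ G) (hRxc : v.1 = R.x1) (hRy : v.2 = R.y1 ∨ v.2 = R.y2) : False := by
  obtain ⟨hSxv, hSyv⟩ := hvalid S hSG
  obtain ⟨hRxv, hRyv⟩ := hvalid R hRG
  obtain ⟨T, hTG, hvT, t, ht0, -, hpT⟩ :=
    exists_cell_near G v (1, 0) (by norm_num) (by norm_num) hint 1 one_pos
  obtain ⟨hTxv, hTyv⟩ := hvalid T hTG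
  rw [Rect.mem_toSet] at hvT hpT
  have hTy1 : T.y1 ≤ v.2 := hvT.2.1
  have hTy2 : v.2 ≤ T.y2 := hvT.2.2
  have hTx1 : T.x1 ≤ v.1 := hvT.1.1
  have hTx2 : v.1 + t ≤ T.x2 := by have := hpT.1.2; simp only at this; linarith
  have hTS : T ≠ S := by rintro rfl; linarith
  have hTx : T.x1 = v.1 := by
    by_contra h
    have h' : T.x1 < v.1 := lt_of_le_of_ne hTx1 h
    obtain ⟨x0, hxa, hxb, hxc, hxd⟩ :=
      ioo_inter (a1 := T.x1) (a2 := T.x2) (b1 := S.x1) (b2 := S.x2)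
        hTxv (by linarith) (by linarith) hSxv
    obtain ⟨y0, hya, hyb, hyc, hyd⟩ :=
      ioo_inter (a1 := T.y1) (a2 := T.y2) (b1 := S.y1) (b2 := S.y2)
        hTyv (by linarith) (by linarith) hSyv
    have hd := hdisj T hTG S hSG hTS
    rw [Set.eq_empty_iff_forall_notMem] at hd
    exact hd (x0, y0) ⟨Rect.mem_interior.mpr ⟨⟨hxa, hxb⟩, hya, hyb⟩,
      Rect.mem_interior.mpr ⟨⟨hxc, hxd⟩, hyc, hyd⟩⟩
  have hinf : (T.toSet ∩ S.toSet).Infinite := by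
    have hab : max T.y1 S.y1 < min T.y2 S.y2 :=
      max_lt (lt_min hTyv (by linarith)) (lt_min (by linarith) hSyv)
    have himg : ((fun y => (v.1, y)) '' Set.Icc (max T.y1 S.y1) (min T.y2 S.y2)).Infinite := by
      apply Set.Infinite.image
      · intro a _ b _ hab'
        simpa using hab'
      · exact Set.Icc_infinite hab
    apply himg.mono
    rintro p ⟨y, hy, rfl⟩
    have h1 : T.y1 ≤ y := le_trans (le_max_left _ _) hy.1
    have h2 : S.y1 ≤ y := le_trans (le_max_right _ _) hy.1
    have h3 : y ≤ T.y2 := le_trans hy.2 (min_le_left _ _)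
    have h4 : y ≤ S.y2 := le_trans hy.2 (min_le_right _ _)
    exact ⟨Rect.mem_toSet.mpr ⟨by simp; constructor <;> linarith, h1, h3⟩,
      Rect.mem_toSet.mpr ⟨by simp; constructor <;> linarith, h2, h4⟩⟩
  rcases hadj T hTG S hSG hTS hinf with ⟨h1, h2, h3⟩ | ⟨h1, h2, h3⟩ | ⟨h1, h2, h3⟩ | ⟨h1, h2, h3⟩
  · linarith
  · -- S.x2 = T.x1, T.y1 = S.y1, T.y2 = S.y2
    have hRT : R ≠ T := by rintro rfl; rcases hRy with h | h <;> linarith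
    have hA : R.y1 < T.y2 := by rcases hRy with h | h <;> linarith
    have hB : T.y1 < R.y2 := by rcases hRy with h | h <;> linarith
    obtain ⟨y0, hya, hyb, hyc, hyd⟩ :=
      ioo_inter (a1 := R.y1) (a2 := R.y2) (b1 := T.y1) (b2 := T.y2) hRyv hA hB hTyv
    obtain ⟨x0, hxa, hxb, hxc, hxd⟩ :=
      ioo_inter (a1 := R.x1) (a2 := R.x2) (b1 := T.x1) (b2 := T.x2)
        hRxv (by linarith) (by linarith) hTxv
    have hd := hdisj R hRG T hTG hRT
    rw [Set.eq_empty_iff_forall_notMem] at hd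
    exact hd (x0, y0) ⟨Rect.mem_interior.mpr ⟨⟨hxa, hxb⟩, hya, hyb⟩,
      Rect.mem_interior.mpr ⟨⟨hxc, hxd⟩, hyc, hyd⟩⟩
  · linarith
  · linarith

lemma left_case (G : Finset Rect)
    (hvalid : ∀ R ∈ G, R.Valid)
    (hdisj : ∀ R ∈ G, ∀ S ∈ G, R ≠ S → interior R.toSet ∩ interior S.toSet = ∅)
    (hadj : ∀ R ∈ G, ∀ S ∈ G, R ≠ S → (R.toSet ∩ S.toSet).Infinite → AlignedAdj R S)
    (v : ℝ × ℝ) (hint : v ∈ interior (⋃ R ∈ G, R.toSet))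
    (S : Rect) (hSG : S ∈ G) (hSy1 : S.y1 < v.2) (hSy2 : v.2 < S.y2) (hSx : v.1 = S.x1)
    (R : Rect) (hRG : R ∈ G) (hRxc : v.1 = R.x2) (hRy : v.2 = R.y1 ∨ v.2 = R.y2) : False := by
  obtain ⟨hSxv, hSyv⟩ := hvalid S hSG
  obtain ⟨hRxv, hRyv⟩ := hvalid R hRG
  obtain ⟨T, hTG, hvT, t, ht0, -, hpT⟩ :=
    exists_cell_near G v (-1, 0) (by norm_num) (by norm_num) hint 1 one_pos
  obtain ⟨hTxv, hTyv⟩ := hvalid T hTG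
  rw [Rect.mem_toSet] at hvT hpT
  have hTy1 : T.y1 ≤ v.2 := hvT.2.1
  have hTy2 : v.2 ≤ T.y2 := hvT.2.2
  have hTx2 : v.1 ≤ T.x2 := hvT.1.2
  have hTx1 : T.x1 ≤ v.1 - t := by have := hpT.1.1; simp only at this; linarith
  have hTS : T ≠ S := by rintro rfl; linarith
  have hTx : T.x2 = v.1 := by
    by_contra h
    have h' : v.1 < T.x2 := lt_of_le_of_ne hTx2 (fun h'' => h h''.symm)
    obtain ⟨x0, hxa, hxb, hxc, hxd⟩ :=
      ioo_inter (a1 := T.x1) (a2 := T.x2) (b1 := S.x1) (b2 := S.x2)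
        hTxv (by linarith) (by linarith) hSxv
    obtain ⟨y0, hya, hyb, hyc, hyd⟩ :=
      ioo_inter (a1 := T.y1) (a2 := T.y2) (b1 := S.y1) (b2 := S.y2)
        hTyv (by linarith) (by linarith) hSyv
    have hd := hdisj T hTG S hSG hTS
    rw [Set.eq_empty_iff_forall_notMem] at hd
    exact hd (x0, y0) ⟨Rect.mem_interior.mpr ⟨⟨hxa, hxb⟩, hya, hyb⟩,
      Rect.mem_interior.mpr ⟨⟨hxc, hxd⟩, hyc, hyd⟩⟩
  have hinf : (T.toSet ∩ S.toSet).Infinite := by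
    have hab : max T.y1 S.y1 < min T.y2 S.y2 :=
      max_lt (lt_min hTyv (by linarith)) (lt_min (by linarith) hSyv)
    have himg : ((fun y => (v.1, y)) '' Set.Icc (max T.y1 S.y1) (min T.y2 S.y2)).Infinite := by
      apply Set.Infinite.image
      · intro a _ b _ hab'
        simpa using hab'
      · exact Set.Icc_infinite hab
    apply himg.mono
    rintro p ⟨y, hy, rfl⟩
    have h1 : T.y1 ≤ y := le_trans (le_max_left _ _) hy.1
    have h2 : S.y1 ≤ y := le_trans (le_max_right _ _) hy.1
    have h3 : y ≤ T.y2 := le_trans hy.2 (min_le_left _ _)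
    have h4 : y ≤ S.y2 := le_trans hy.2 (min_le_right _ _)
    exact ⟨Rect.mem_toSet.mpr ⟨by simp; constructor <;> linarith, h1, h3⟩,
      Rect.mem_toSet.mpr ⟨by simp; constructor <;> linarith, h2, h4⟩⟩
  rcases hadj T hTG S hSG hTS hinf with ⟨h1, h2, h3⟩ | ⟨h1, h2, h3⟩ | ⟨h1, h2, h3⟩ | ⟨h1, h2, h3⟩
  · -- T.x2 = S.x1, T.y1 = S.y1, T.y2 = S.y2
    have hRT : R ≠ T := by rintro rfl; rcases hRy with h | h <;> linarith
    have hA : R.y1 < T.y2 := by rcases hRy with h | h <;> linarith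
    have hB : T.y1 < R.y2 := by rcases hRy with h | h <;> linarith
    obtain ⟨y0, hya, hyb, hyc, hyd⟩ :=
      ioo_inter (a1 := R.y1) (a2 := R.y2) (b1 := T.y1) (b2 := T.y2) hRyv hA hB hTyv
    obtain ⟨x0, hxa, hxb, hxc, hxd⟩ :=
      ioo_inter (a1 := R.x1) (a2 := R.x2) (b1 := T.x1) (b2 := T.x2)
        hRxv (by linarith) (by linarith) hTxv
    have hd := hdisj R hRG T hTG hRT
    rw [Set.eq_empty_iff_forall_notMem] at hd
    exact hd (x0, y0) ⟨Rect.mem_interior.mpr ⟨⟨hxa, hxb⟩, hya, hyb⟩,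
      Rect.mem_interior.mpr ⟨⟨hxc, hxd⟩, hyc, hyd⟩⟩
  · linarith
  · linarith
  · linarith

/-- In a finite group G of rectangular cells with pairwise disjoint interiors, in which
any two adjacent cells (cells meeting in infinitely many points, i.e. along a segment)
are aligned-adjacent, and which is connected under aligned-adjacency, there is no
T-vertex on interior edges: every vertex of a cell of G lying in the interior of the
union is a corner of every cell of G containing it. -/
theorem no_T_vertex_on_interior_edges_of_connected_group
    (G : Finset Rect)
    (hvalid : ∀ R ∈ G, R.Valid)
    (hdisj : ∀ R ∈ G, ∀ S ∈ G, R ≠ S → interior R.toSet ∩ interior S.toSet = ∅)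
    (hadj : ∀ R ∈ G, ∀ S ∈ G, R ≠ S → (R.toSet ∩ S.toSet).Infinite → AlignedAdj R S)
    (hconn : ∀ R ∈ G, ∀ S ∈ G,
      Relation.ReflTransGen (fun A B => A ∈ G ∧ B ∈ G ∧ AlignedAdj A B) R S)
    (v : ℝ × ℝ)
    (hv : ∃ R ∈ G, R.IsCorner v)
    (hint : v ∈ interior (⋃ R ∈ G, R.toSet)) :
    ∀ S ∈ G, v ∈ S.toSet → S.IsCorner v := by
  intro S hSG hvS
  by_contra hnc
  obtain ⟨R, hRG, hRx, hRy⟩ := hv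
  obtain ⟨hSxv, hSyv⟩ := hvalid S hSG
  obtain ⟨hRxv, hRyv⟩ := hvalid R hRG
  rw [Rect.mem_toSet] at hvS
  obtain ⟨⟨hs1, hs2⟩, hs3, hs4⟩ := hvS
  rw [Rect.IsCorner] at hnc
  rcases not_and_or.mp hnc with h | h
  · -- v.1 is strictly inside S's x-range
    push_neg at h
    have hx1 : S.x1 < v.1 := lt_of_le_of_ne hs1 (Ne.symm h.1)
    have hx2 : v.1 < S.x2 := lt_of_le_of_ne hs2 h.2
    by_cases hA : R.y1 < S.y2
    · by_cases hB : S.y1 < R.y2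
      · -- interiors of R and S overlap
        have hRS : R ≠ S := by rintro rfl; rcases hRx with h' | h' <;> linarith
        have hxA : R.x1 < S.x2 := by rcases hRx with h' | h' <;> linarith
        have hxB : S.x1 < R.x2 := by rcases hRx with h' | h' <;> linarith
        obtain ⟨x0, hxa, hxb, hxc, hxd⟩ :=
          ioo_inter (a1 := R.x1) (a2 := R.x2) (b1 := S.x1) (b2 := S.x2) hRxv hxA hxB hSxv
        obtain ⟨y0, hya, hyb, hyc, hyd⟩ :=
          ioo_inter (a1 := R.y1) (a2 := R.y2) (b1 := S.y1) (b2 := S.y2) hRyv hA hB hSyv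
        have hd := hdisj R hRG S hSG hRS
        rw [Set.eq_empty_iff_forall_notMem] at hd
        exact hd (x0, y0) ⟨Rect.mem_interior.mpr ⟨⟨hxa, hxb⟩, hya, hyb⟩,
          Rect.mem_interior.mpr ⟨⟨hxc, hxd⟩, hyc, hyd⟩⟩
      · -- R.y2 ≤ S.y1, forces v.2 = S.y1 = R.y2 : bottom case
        push_neg at hB
        have hry2 : v.2 ≤ R.y2 := by rcases hRy with h' | h' <;> linarith
        exact bottom_case G hvalid hdisj hadj v hint S hSG hx1 hx2 (by linarith) R hRG
          (by linarith) hRx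
    · -- S.y2 ≤ R.y1, forces v.2 = S.y2 = R.y1 : top case
      push_neg at hA
      have hry1 : R.y1 ≤ v.2 := by rcases hRy with h' | h' <;> linarith
      exact top_case G hvalid hdisj hadj v hint S hSG hx1 hx2 (by linarith) R hRG
        (by linarith) hRx
  · -- v.2 is strictly inside S's y-range
    push_neg at h
    have hy1 : S.y1 < v.2 := lt_of_le_of_ne hs3 (Ne.symm h.1)
    have hy2 : v.2 < S.y2 := lt_of_le_of_ne hs4 h.2
    by_cases hA : R.x1 < S.x2
    · by_cases hB : S.x1 < R.x2
      · have hRS : R ≠ S := by rintro rfl; rcases hRy with h' | h' <;> linarith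
        have hyA : R.y1 < S.y2 := by rcases hRy with h' | h' <;> linarith
        have hyB : S.y1 < R.y2 := by rcases hRy with h' | h' <;> linarith
        obtain ⟨x0, hxa, hxb, hxc, hxd⟩ :=
          ioo_inter (a1 := R.x1) (a2 := R.x2) (b1 := S.x1) (b2 := S.x2) hRxv hA hB hSxv
        obtain ⟨y0, hya, hyb, hyc, hyd⟩ :=
          ioo_inter (a1 := R.y1) (a2 := R.y2) (b1 := S.y1) (b2 := S.y2) hRyv hyA hyB hSyv
        have hd := hdisj R hRG S hSG hRS
        rw [Set.eq_empty_iff_forall_notMem] at hd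
        exact hd (x0, y0) ⟨Rect.mem_interior.mpr ⟨⟨hxa, hxb⟩, hya, hyb⟩,
          Rect.mem_interior.mpr ⟨⟨hxc, hxd⟩, hyc, hyd⟩⟩
      · -- R.x2 ≤ S.x1, forces v.1 = S.x1 = R.x2 : left case
        push_neg at hB
        have hrx2 : v.1 ≤ R.x2 := by rcases hRx with h' | h' <;> linarith
        exact left_case G hvalid hdisj hadj v hint S hSG hy1 hy2 (by linarith) R hRG
          (by linarith) hRy
    · -- S.x2 ≤ R.x1, forces v.1 = S.x2 = R.x1 : right case
      push_neg at hA
      have hrx1 : R.x1 ≤ v.1 := by rcases hRx with h' | h' <;> linarith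
      exact right_case G hvalid hdisj hadj v hint S hSG hy1 hy2 (by linarith) R hRG
        (by linarith) hRy
end

section
/- Let b : ℝ² → ℝ be a function that is a bicubic polynomial on each cell of a rectangular mesh and is globally C^{1,1} (C¹ in each variable). If a cell θ is split into two subcells and, after re-expressing b in Bernstein form on the subcells via de Casteljau subdivision, the four Bézier ordinates associated with the new vertex v on the common edge of the subcells are set to zero in b's representation (and the matching ordinates in the neighboring cell across the edge containing v are set to zero correspondingly so that the C¹ conditions across all edges through v are maintained), then the modified function b̄ satisfies b̄(v) = 0, b̄_s(v) = 0, b̄_t(v) = 0, b̄_{st}(v) = 0, and b̄ remains C^{1,1}. -/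
/-- The cubic Bernstein polynomial `B_i³(u) = C(3,i) uⁱ (1-u)^{3-i}`. -/
noncomputable def bern3 (i : ℕ) (u : ℝ) : ℝ := (Nat.choose 3 i : ℝ) * u^i * (1-u)^(3-i)

noncomputable def dbern3 : ℕ → ℝ → ℝ
  | 0, u => -3*(1-u)^2
  | 1, u => 3*(1-u)^2 - 6*u*(1-u)
  | 2, u => 6*u*(1-u) - 3*u^2
  | 3, u => 3*u^2
  | _+4, _ => 0

lemma bern3_hasDerivAt (i : ℕ) (hi : i < 4) (u : ℝ) :
    HasDerivAt (bern3 i) (dbern3 i u) u := by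
  have h1 : HasDerivAt (fun v : ℝ => 1 - v) (-1) u := by
    simpa using ((hasDerivAt_id u).const_sub 1)
  interval_cases i
  · have h2 := h1.fun_pow 3
    have he : (fun v : ℝ => (1-v)^3) = bern3 0 := by funext v; simp [bern3]
    rw [he] at h2
    refine h2.congr_deriv (Eq.symm ?_)
    show dbern3 0 u = _
    simp only [dbern3]; norm_num
  · have h2 := ((hasDerivAt_id u).const_mul 3).fun_mul (h1.fun_pow 2)
    have he : (fun v : ℝ => (3:ℝ) * id v * (1-v)^2) = bern3 1 := by
      funext v; simp [bern3]
    rw [he] at h2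
    refine h2.congr_deriv (Eq.symm ?_)
    show dbern3 1 u = _
    simp only [dbern3, id_eq]; norm_num; ring
  · have h2 := ((hasDerivAt_pow 2 u).const_mul 3).fun_mul h1
    have he : (fun v : ℝ => (3:ℝ) * v^2 * (1-v)) = bern3 2 := by
      funext v; simp [bern3]
    rw [he] at h2
    refine h2.congr_deriv (Eq.symm ?_)
    show dbern3 2 u = _
    simp only [dbern3]; norm_num; ring
  · have h2 := hasDerivAt_pow 3 u
    have he : (fun v : ℝ => v^3) = bern3 3 := by funext v; simp [bern3]
    rw [he] at h2
    exact h2.congr_deriv (by simp only [dbern3]; norm_num)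
@[simp] lemma bern3_00 : bern3 0 0 = 1 := by norm_num [bern3]
@[simp] lemma bern3_10 : bern3 1 0 = 0 := by norm_num [bern3]
@[simp] lemma bern3_20 : bern3 2 0 = 0 := by norm_num [bern3]
@[simp] lemma bern3_30 : bern3 3 0 = 0 := by norm_num [bern3]
@[simp] lemma bern3_01 : bern3 0 1 = 0 := by norm_num [bern3]
@[simp] lemma bern3_11 : bern3 1 1 = 0 := by norm_num [bern3]
@[simp] lemma bern3_21 : bern3 2 1 = 0 := by norm_num [bern3]
@[simp] lemma bern3_31 : bern3 3 1 = 1 := by norm_num [bern3]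
@[simp] lemma dbern3_00 : dbern3 0 0 = -3 := by norm_num [dbern3]
@[simp] lemma dbern3_10 : dbern3 1 0 = 3 := by norm_num [dbern3]
@[simp] lemma dbern3_20 : dbern3 2 0 = 0 := by norm_num [dbern3]
@[simp] lemma dbern3_30 : dbern3 3 0 = 0 := by norm_num [dbern3]
@[simp] lemma dbern3_01 : dbern3 0 1 = 0 := by norm_num [dbern3]
@[simp] lemma dbern3_11 : dbern3 1 1 = 0 := by norm_num [dbern3]
@[simp] lemma dbern3_21 : dbern3 2 1 = -3 := by norm_num [dbern3]
@[simp] lemma dbern3_31 : dbern3 3 1 = 3 := by norm_num [dbern3]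

lemma bern3_continuous (i : ℕ) : Continuous (bern3 i) := by
  unfold bern3; fun_prop

lemma dbern3_continuous (i : ℕ) : Continuous (dbern3 i) := by
  match i with
  | 0 => show Continuous fun u : ℝ => -3*(1-u)^2; fun_prop
  | 1 => show Continuous fun u : ℝ => 3*(1-u)^2 - 6*u*(1-u); fun_prop
  | 2 => show Continuous fun u : ℝ => 6*u*(1-u) - 3*u^2; fun_prop
  | 3 => show Continuous fun u : ℝ => 3*u^2; fun_prop
  | n+4 => exact continuous_const

noncomputable def Dmap (a b : ℝ) : ℝ × ℝ →L[ℝ] ℝ :=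
  a • ContinuousLinearMap.fst ℝ ℝ ℝ + b • ContinuousLinearMap.snd ℝ ℝ ℝ

@[simp] lemma Dmap_apply (a b : ℝ) (v : ℝ × ℝ) : Dmap a b v = a * v.1 + b * v.2 := by
  simp [Dmap, smul_eq_mul]

lemma continuous_Dmap {α : Type*} [TopologicalSpace α] {A B : α → ℝ}
    (hA : Continuous A) (hB : Continuous B) : Continuous fun p => Dmap (A p) (B p) := by
  exact (hA.smul continuous_const).add (hB.smul continuous_const)

lemma hasFDerivAt_split (u v : ℝ → ℝ) (u' v' : ℝ) (p : ℝ × ℝ)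
    (hu : HasDerivAt u u' p.1) (hv : HasDerivAt v v' p.2) :
    HasFDerivAt (fun q : ℝ × ℝ => u q.1 * v q.2) (Dmap (u' * v p.2) (u p.1 * v')) p := by
  have h1 : HasFDerivAt (fun q : ℝ × ℝ => u q.1)
      ((ContinuousLinearMap.smulRight (1 : ℝ →L[ℝ] ℝ) u').comp
        (ContinuousLinearMap.fst ℝ ℝ ℝ)) p :=
    hu.hasFDerivAt.comp p hasFDerivAt_fst
  have h2 : HasFDerivAt (fun q : ℝ × ℝ => v q.2)
      ((ContinuousLinearMap.smulRight (1 : ℝ →L[ℝ] ℝ) v').comp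
        (ContinuousLinearMap.snd ℝ ℝ ℝ)) p :=
    hv.hasFDerivAt.comp p hasFDerivAt_snd
  have h3 := h1.fun_mul h2
  refine h3.congr_fderiv ?_
  ext w <;> simp [Dmap, smul_eq_mul] <;> ring

lemma glueHasFDerivAt (π : ℝ × ℝ → ℝ) (hπ : Continuous π) (c : ℝ)
    (f g : ℝ × ℝ → ℝ) (f' g' : ℝ × ℝ → (ℝ × ℝ →L[ℝ] ℝ))
    (hf : ∀ p, HasFDerivAt f (f' p) p) (hg : ∀ p, HasFDerivAt g (g' p) p)
    (heq : ∀ p, π p = c → f p = g p) (heq' : ∀ p, π p = c → f' p = g' p) (p : ℝ × ℝ) :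
    HasFDerivAt (fun q => if π q ≤ c then f q else g q)
      (if π p ≤ c then f' p else g' p) p := by
  rcases lt_trichotomy (π p) c with hlt | heqc | hgt
  · rw [if_pos hlt.le]
    refine (hf p).congr_of_eventuallyEq ?_
    have hmem : {q | π q < c} ∈ nhds p := (isOpen_lt hπ continuous_const).mem_nhds hlt
    filter_upwards [hmem] with q hq
    exact if_pos hq.le
  · rw [if_pos heqc.le]
    have hfw : HasFDerivWithinAt (fun q => if π q ≤ c then f q else g q) (f' p)
        {q | π q ≤ c} p := by
      refine (hf p).hasFDerivWithinAt.congr (fun q hq => if_pos hq) (if_pos heqc.le)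
    have hgw : HasFDerivWithinAt (fun q => if π q ≤ c then f q else g q) (f' p)
        {q | c ≤ π q} p := by
      rw [heq' p heqc]
      refine (hg p).hasFDerivWithinAt.congr (fun q hq => ?_) ?_
      · by_cases h : π q ≤ c
        · rw [if_pos h]; exact heq q (le_antisymm h hq)
        · rw [if_neg h]
      · rw [if_pos heqc.le]; exact heq p heqc
    have := hfw.union hgw
    have hset : {q | π q ≤ c} ∪ {q | c ≤ π q} = Set.univ := by
      ext q; simp [le_total]
    rw [hset, hasFDerivWithinAt_univ] at this
    exact this
  · rw [if_neg (not_le.mpr hgt)]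
    refine (hg p).congr_of_eventuallyEq ?_
    have hmem : {q | c < π q} ∈ nhds p := (isOpen_lt continuous_const hπ).mem_nhds hgt
    filter_upwards [hmem] with q hq
    exact if_neg (not_le.mpr hq)

noncomputable def pFun (C : ℕ → ℕ → ℝ) (xa xb ya yb : ℝ) (p : ℝ × ℝ) : ℝ :=
  ∑ i ∈ Finset.range 4, ∑ j ∈ Finset.range 4,
    C i j * bern3 i ((p.1 - xa)/(xb - xa)) * bern3 j ((p.2 - ya)/(yb - ya))

noncomputable def pFx (C : ℕ → ℕ → ℝ) (xa xb ya yb : ℝ) (p : ℝ × ℝ) : ℝ :=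
  ∑ i ∈ Finset.range 4, ∑ j ∈ Finset.range 4,
    C i j * (dbern3 i ((p.1 - xa)/(xb - xa)) * (xb - xa)⁻¹) * bern3 j ((p.2 - ya)/(yb - ya))

noncomputable def pFy (C : ℕ → ℕ → ℝ) (xa xb ya yb : ℝ) (p : ℝ × ℝ) : ℝ :=
  ∑ i ∈ Finset.range 4, ∑ j ∈ Finset.range 4,
    C i j * bern3 i ((p.1 - xa)/(xb - xa)) * (dbern3 j ((p.2 - ya)/(yb - ya)) * (yb - ya)⁻¹)

noncomputable def pD (C : ℕ → ℕ → ℝ) (xa xb ya yb : ℝ) (p : ℝ × ℝ) : ℝ × ℝ →L[ℝ] ℝ :=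
  Dmap (pFx C xa xb ya yb p) (pFy C xa xb ya yb p)

lemma affine_hasDerivAt (a b s : ℝ) : HasDerivAt (fun u : ℝ => (u - a)/(b - a)) ((b-a)⁻¹) s := by
  have := ((hasDerivAt_id s).sub_const a).div_const (b - a)
  simpa [one_div] using this

lemma pFun_hasFDerivAt (C : ℕ → ℕ → ℝ) (xa xb ya yb : ℝ) (p : ℝ × ℝ) :
    HasFDerivAt (pFun C xa xb ya yb) (pD C xa xb ya yb p) p := by
  have key : ∀ i ∈ Finset.range 4, ∀ j ∈ Finset.range 4,
      HasFDerivAt (fun q : ℝ × ℝ =>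
          C i j * bern3 i ((q.1 - xa)/(xb - xa)) * bern3 j ((q.2 - ya)/(yb - ya)))
        (Dmap (C i j * (dbern3 i ((p.1 - xa)/(xb - xa)) * (xb - xa)⁻¹)
            * bern3 j ((p.2 - ya)/(yb - ya)))
          (C i j * bern3 i ((p.1 - xa)/(xb - xa))
            * (dbern3 j ((p.2 - ya)/(yb - ya)) * (yb - ya)⁻¹))) p := by
    intro i hi j hj
    have hu : HasDerivAt (fun s => C i j * bern3 i ((s - xa)/(xb - xa)))
        (C i j * (dbern3 i ((p.1 - xa)/(xb - xa)) * (xb - xa)⁻¹)) p.1 :=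
      (((bern3_hasDerivAt i (Finset.mem_range.1 hi) _).comp p.1
        (affine_hasDerivAt xa xb p.1))).const_mul (C i j)
    have hv : HasDerivAt (fun t => bern3 j ((t - ya)/(yb - ya)))
        (dbern3 j ((p.2 - ya)/(yb - ya)) * (yb - ya)⁻¹) p.2 :=
      (bern3_hasDerivAt j (Finset.mem_range.1 hj) _).comp p.2 (affine_hasDerivAt ya yb p.2)
    exact hasFDerivAt_split _ _ _ _ p hu hv
  have hsum : HasFDerivAt (pFun C xa xb ya yb)
      (∑ i ∈ Finset.range 4, ∑ j ∈ Finset.range 4,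
        Dmap (C i j * (dbern3 i ((p.1 - xa)/(xb - xa)) * (xb - xa)⁻¹)
            * bern3 j ((p.2 - ya)/(yb - ya)))
          (C i j * bern3 i ((p.1 - xa)/(xb - xa))
            * (dbern3 j ((p.2 - ya)/(yb - ya)) * (yb - ya)⁻¹))) p := by
    unfold pFun
    exact HasFDerivAt.sum (fun i hi => HasFDerivAt.sum (fun j hj => key i hi j hj))
  have hD : ∀ (s : Finset ℕ) (a b : ℕ → ℝ),
      (∑ i ∈ s, Dmap (a i) (b i)) = Dmap (∑ i ∈ s, a i) (∑ i ∈ s, b i) := by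
    intro s a b
    refine ContinuousLinearMap.ext fun v => ?_
    simp [Dmap, ContinuousLinearMap.sum_apply, smul_eq_mul, Finset.sum_add_distrib,
      Finset.sum_mul]
  have hre : (∑ i ∈ Finset.range 4, ∑ j ∈ Finset.range 4,
        Dmap (C i j * (dbern3 i ((p.1 - xa)/(xb - xa)) * (xb - xa)⁻¹)
            * bern3 j ((p.2 - ya)/(yb - ya)))
          (C i j * bern3 i ((p.1 - xa)/(xb - xa))
            * (dbern3 j ((p.2 - ya)/(yb - ya)) * (yb - ya)⁻¹)))
      = pD C xa xb ya yb p := by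
    rw [Finset.sum_congr rfl (fun i _ => hD _ _ _), hD]
    rfl
  rw [hre] at hsum
  exact hsum

lemma pFx_continuous (C : ℕ → ℕ → ℝ) (xa xb ya yb : ℝ) : Continuous (pFx C xa xb ya yb) := by
  have hX : Continuous fun p : ℝ × ℝ => (p.1 - xa)/(xb - xa) := by fun_prop
  have hY : Continuous fun p : ℝ × ℝ => (p.2 - ya)/(yb - ya) := by fun_prop
  unfold pFx
  refine continuous_finset_sum _ fun i _ => continuous_finset_sum _ fun j _ => ?_
  exact (continuous_const.mul (((dbern3_continuous i).comp hX).mul continuous_const)).mul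
    ((bern3_continuous j).comp hY)

lemma pFy_continuous (C : ℕ → ℕ → ℝ) (xa xb ya yb : ℝ) : Continuous (pFy C xa xb ya yb) := by
  have hX : Continuous fun p : ℝ × ℝ => (p.1 - xa)/(xb - xa) := by fun_prop
  have hY : Continuous fun p : ℝ × ℝ => (p.2 - ya)/(yb - ya) := by fun_prop
  unfold pFy
  refine continuous_finset_sum _ fun i _ => continuous_finset_sum _ fun j _ => ?_
  exact (continuous_const.mul ((bern3_continuous i).comp hX)).mul
    (((dbern3_continuous j).comp hY).mul continuous_const)

lemma pD_continuous (C : ℕ → ℕ → ℝ) (xa xb ya yb : ℝ) : Continuous (pD C xa xb ya yb) :=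
  continuous_Dmap (pFx_continuous C xa xb ya yb) (pFy_continuous C xa xb ya yb)

lemma edge_x (CL CR : ℕ → ℕ → ℝ) (xa xb xc ya yb : ℝ) (hab : xb - xa ≠ 0)
    (h : ∀ j < 4, CL 3 j = CR 0 j ∧
      (CL 3 j - CL 2 j)/(xb - xa) = (CR 1 j - CR 0 j)/(xc - xb))
    (q : ℝ × ℝ) (hq : q.1 = xb) :
    pFun CL xa xb ya yb q = pFun CR xb xc ya yb q ∧
    pFx CL xa xb ya yb q = pFx CR xb xc ya yb q ∧
    pFy CL xa xb ya yb q = pFy CR xb xc ya yb q := by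
  have hX1 : (q.1 - xa)/(xb - xa) = 1 := by rw [hq]; exact div_self hab
  have hX0 : (q.1 - xb)/(xc - xb) = 0 := by rw [hq]; simp
  have h0 := h 0 (by norm_num); have h1 := h 1 (by norm_num)
  have h2 := h 2 (by norm_num); have h3 := h 3 (by norm_num)
  unfold pFun pFx pFy
  rw [hX1, hX0]
  refine ⟨?_, ?_, ?_⟩ <;> simp [Finset.sum_range_succ]
  · linear_combination (bern3 0 ((q.2 - ya)/(yb - ya))) * h0.1 +
      (bern3 1 ((q.2 - ya)/(yb - ya))) * h1.1 +
      (bern3 2 ((q.2 - ya)/(yb - ya))) * h2.1 +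
      (bern3 3 ((q.2 - ya)/(yb - ya))) * h3.1
  · linear_combination 3 * (bern3 0 ((q.2 - ya)/(yb - ya))) * h0.2 +
      3 * (bern3 1 ((q.2 - ya)/(yb - ya))) * h1.2 +
      3 * (bern3 2 ((q.2 - ya)/(yb - ya))) * h2.2 +
      3 * (bern3 3 ((q.2 - ya)/(yb - ya))) * h3.2
  · linear_combination (dbern3 0 ((q.2 - ya)/(yb - ya)) * (yb - ya)⁻¹) * h0.1 +
      (dbern3 1 ((q.2 - ya)/(yb - ya)) * (yb - ya)⁻¹) * h1.1 +
      (dbern3 2 ((q.2 - ya)/(yb - ya)) * (yb - ya)⁻¹) * h2.1 +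
      (dbern3 3 ((q.2 - ya)/(yb - ya)) * (yb - ya)⁻¹) * h3.1

lemma edge_y (CB CT : ℕ → ℕ → ℝ) (xa xb ya yb yc : ℝ) (hab : yb - ya ≠ 0)
    (h : ∀ i < 4, CB i 3 = CT i 0 ∧
      (CB i 3 - CB i 2)/(yb - ya) = (CT i 1 - CT i 0)/(yc - yb))
    (q : ℝ × ℝ) (hq : q.2 = yb) :
    pFun CB xa xb ya yb q = pFun CT xa xb yb yc q ∧
    pFx CB xa xb ya yb q = pFx CT xa xb yb yc q ∧
    pFy CB xa xb ya yb q = pFy CT xa xb yb yc q := by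
  have hY1 : (q.2 - ya)/(yb - ya) = 1 := by rw [hq]; exact div_self hab
  have hY0 : (q.2 - yb)/(yc - yb) = 0 := by rw [hq]; simp
  have h0 := h 0 (by norm_num); have h1 := h 1 (by norm_num)
  have h2 := h 2 (by norm_num); have h3 := h 3 (by norm_num)
  unfold pFun pFx pFy
  rw [hY1, hY0]
  refine ⟨?_, ?_, ?_⟩ <;> simp [Finset.sum_range_succ]
  · linear_combination (bern3 0 ((q.1 - xa)/(xb - xa))) * h0.1 +
      (bern3 1 ((q.1 - xa)/(xb - xa))) * h1.1 +
      (bern3 2 ((q.1 - xa)/(xb - xa))) * h2.1 +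
      (bern3 3 ((q.1 - xa)/(xb - xa))) * h3.1
  · linear_combination (dbern3 0 ((q.1 - xa)/(xb - xa)) * (xb - xa)⁻¹) * h0.1 +
      (dbern3 1 ((q.1 - xa)/(xb - xa)) * (xb - xa)⁻¹) * h1.1 +
      (dbern3 2 ((q.1 - xa)/(xb - xa)) * (xb - xa)⁻¹) * h2.1 +
      (dbern3 3 ((q.1 - xa)/(xb - xa)) * (xb - xa)⁻¹) * h3.1
  · linear_combination 3 * (bern3 0 ((q.1 - xa)/(xb - xa))) * h0.2 +
      3 * (bern3 1 ((q.1 - xa)/(xb - xa))) * h1.2 +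
      3 * (bern3 2 ((q.1 - xa)/(xb - xa))) * h2.2 +
      3 * (bern3 3 ((q.1 - xa)/(xb - xa))) * h3.2

/-- The modification mechanism of (modified) PHT-splines: after subdivision, if in the
four bicubic pieces around a new vertex v = (x1,y1) the Bézier ordinates associated with
v (the 2×2 block of ordinates nearest v in each piece) are set to zero, and the C¹
matching conditions across the four edges through v are maintained, then the modified
function vanishes to first order at v (value, both first partials, and the mixed second
partial are zero) and remains C^{1,1} in a neighborhood of v. -/
theorem pht_modification_vanishes_at_new_vertex
    (x0 x1 x2 y0 y1 y2 : ℝ)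
    (hx0 : x0 < x1) (hx1 : x1 < x2) (hy0 : y0 < y1) (hy1 : y1 < y2)
    (B00 B10 B01 B11 : ℕ → ℕ → ℝ)
    -- ordinates associated with the vertex v = (x1, y1) are set to zero
    (hz00 : ∀ i ∈ ({2, 3} : Set ℕ), ∀ j ∈ ({2, 3} : Set ℕ), B00 i j = 0)
    (hz10 : ∀ i ∈ ({0, 1} : Set ℕ), ∀ j ∈ ({2, 3} : Set ℕ), B10 i j = 0)
    (hz01 : ∀ i ∈ ({2, 3} : Set ℕ), ∀ j ∈ ({0, 1} : Set ℕ), B01 i j = 0)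
    (hz11 : ∀ i ∈ ({0, 1} : Set ℕ), ∀ j ∈ ({0, 1} : Set ℕ), B11 i j = 0)
    -- C¹ conditions across the four edges through v are maintained
    (hC1a : ∀ j < 4, B00 3 j = B10 0 j ∧
      (B00 3 j - B00 2 j)/(x1-x0) = (B10 1 j - B10 0 j)/(x2-x1))
    (hC1b : ∀ j < 4, B01 3 j = B11 0 j ∧
      (B01 3 j - B01 2 j)/(x1-x0) = (B11 1 j - B11 0 j)/(x2-x1))
    (hC1c : ∀ i < 4, B00 i 3 = B01 i 0 ∧
      (B00 i 3 - B00 i 2)/(y1-y0) = (B01 i 1 - B01 i 0)/(y2-y1))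
    (hC1d : ∀ i < 4, B10 i 3 = B11 i 0 ∧
      (B10 i 3 - B10 i 2)/(y1-y0) = (B11 i 1 - B11 i 0)/(y2-y1)) :
    let loc : (ℕ → ℕ → ℝ) → ℝ → ℝ → ℝ → ℝ → ℝ × ℝ → ℝ := fun C xa xb ya yb p =>
      ∑ i ∈ Finset.range 4, ∑ j ∈ Finset.range 4,
        C i j * bern3 i ((p.1 - xa)/(xb - xa)) * bern3 j ((p.2 - ya)/(yb - ya))
    let bbar : ℝ × ℝ → ℝ := fun p =>
      if p.1 ≤ x1 then
        (if p.2 ≤ y1 then loc B00 x0 x1 y0 y1 p else loc B01 x0 x1 y1 y2 p)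
      else
        (if p.2 ≤ y1 then loc B10 x1 x2 y0 y1 p else loc B11 x1 x2 y1 y2 p)
    bbar (x1, y1) = 0 ∧
    deriv (fun a => bbar (a, y1)) x1 = 0 ∧
    deriv (fun a => bbar (x1, a)) y1 = 0 ∧
    deriv (fun a => deriv (fun a' => bbar (a', a)) x1) y1 = 0 ∧
    ContDiffOn ℝ 1 bbar (Set.Ioo x0 x2 ×ˢ Set.Ioo y0 y2) := by
  intro loc bbar
  have hxd : x1 - x0 ≠ 0 := sub_ne_zero.mpr hx0.ne'
  have hx2d : x2 - x1 ≠ 0 := sub_ne_zero.mpr hx1.ne'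
  have hyd : y1 - y0 ≠ 0 := sub_ne_zero.mpr hy0.ne'
  have hy2d : y2 - y1 ≠ 0 := sub_ne_zero.mpr hy1.ne'
  have hbb : bbar = fun p => if p.1 ≤ x1 then
      (if p.2 ≤ y1 then pFun B00 x0 x1 y0 y1 p else pFun B01 x0 x1 y1 y2 p)
    else
      (if p.2 ≤ y1 then pFun B10 x1 x2 y0 y1 p else pFun B11 x1 x2 y1 y2 p) := rfl
  -- edge facts
  have eA := fun q (hq : (q : ℝ × ℝ).1 = x1) => edge_x B00 B10 x0 x1 x2 y0 y1 hxd hC1a q hq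
  have eB := fun q (hq : (q : ℝ × ℝ).1 = x1) => edge_x B01 B11 x0 x1 x2 y1 y2 hxd hC1b q hq
  have eC := fun q (hq : (q : ℝ × ℝ).2 = y1) => edge_y B00 B01 x0 x1 y0 y1 y2 hyd hC1c q hq
  have eD := fun q (hq : (q : ℝ × ℝ).2 = y1) => edge_y B10 B11 x1 x2 y0 y1 y2 hyd hC1d q hq
  -- pD equalities on edges
  have eCD : ∀ q : ℝ × ℝ, q.2 = y1 → pD B00 x0 x1 y0 y1 q = pD B01 x0 x1 y1 y2 q := by
    intro q hq
    refine ContinuousLinearMap.ext fun v => ?_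
    simp only [pD, Dmap_apply, (eC q hq).2.1, (eC q hq).2.2]
  have eDD : ∀ q : ℝ × ℝ, q.2 = y1 → pD B10 x1 x2 y0 y1 q = pD B11 x1 x2 y1 y2 q := by
    intro q hq
    refine ContinuousLinearMap.ext fun v => ?_
    simp only [pD, Dmap_apply, (eD q hq).2.1, (eD q hq).2.2]
  have eAD : ∀ q : ℝ × ℝ, q.1 = x1 → pD B00 x0 x1 y0 y1 q = pD B10 x1 x2 y0 y1 q := by
    intro q hq
    refine ContinuousLinearMap.ext fun v => ?_
    simp only [pD, Dmap_apply, (eA q hq).2.1, (eA q hq).2.2]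
  have eBD : ∀ q : ℝ × ℝ, q.1 = x1 → pD B01 x0 x1 y1 y2 q = pD B11 x1 x2 y1 y2 q := by
    intro q hq
    refine ContinuousLinearMap.ext fun v => ?_
    simp only [pD, Dmap_apply, (eB q hq).2.1, (eB q hq).2.2]
  -- left and right glued functions
  have hgL : ∀ p : ℝ × ℝ, HasFDerivAt
      (fun q : ℝ × ℝ => if q.2 ≤ y1 then pFun B00 x0 x1 y0 y1 q else pFun B01 x0 x1 y1 y2 q)
      (if p.2 ≤ y1 then pD B00 x0 x1 y0 y1 p else pD B01 x0 x1 y1 y2 p) p := by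
    intro p
    exact glueHasFDerivAt Prod.snd continuous_snd y1 _ _ _ _
      (pFun_hasFDerivAt B00 x0 x1 y0 y1) (pFun_hasFDerivAt B01 x0 x1 y1 y2)
      (fun q hq => (eC q hq).1) eCD p
  have hgR : ∀ p : ℝ × ℝ, HasFDerivAt
      (fun q : ℝ × ℝ => if q.2 ≤ y1 then pFun B10 x1 x2 y0 y1 q else pFun B11 x1 x2 y1 y2 q)
      (if p.2 ≤ y1 then pD B10 x1 x2 y0 y1 p else pD B11 x1 x2 y1 y2 p) p := by
    intro p
    exact glueHasFDerivAt Prod.snd continuous_snd y1 _ _ _ _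
      (pFun_hasFDerivAt B10 x1 x2 y0 y1) (pFun_hasFDerivAt B11 x1 x2 y1 y2)
      (fun q hq => (eD q hq).1) eDD p
  -- the global derivative
  have hH : ∀ p : ℝ × ℝ, HasFDerivAt bbar
      (if p.1 ≤ x1 then
        (if p.2 ≤ y1 then pD B00 x0 x1 y0 y1 p else pD B01 x0 x1 y1 y2 p)
      else
        (if p.2 ≤ y1 then pD B10 x1 x2 y0 y1 p else pD B11 x1 x2 y1 y2 p)) p := by
    intro p
    rw [hbb]
    exact glueHasFDerivAt Prod.fst continuous_fst x1 _ _ _ _ hgL hgR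
      (fun q hq => by
        by_cases h : q.2 ≤ y1
        · simp only [if_pos h]; exact (eA q hq).1
        · simp only [if_neg h]; exact (eB q hq).1)
      (fun q hq => by
        by_cases h : q.2 ≤ y1
        · simp only [if_pos h]; exact eAD q hq
        · simp only [if_neg h]; exact eBD q hq) p
  have hHcont : Continuous (fun p : ℝ × ℝ =>
      if p.1 ≤ x1 then
        (if p.2 ≤ y1 then pD B00 x0 x1 y0 y1 p else pD B01 x0 x1 y1 y2 p)
      else
        (if p.2 ≤ y1 then pD B10 x1 x2 y0 y1 p else pD B11 x1 x2 y1 y2 p)) := by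
    refine Continuous.if_le ?_ ?_ continuous_fst continuous_const ?_
    · exact Continuous.if_le (pD_continuous _ _ _ _ _) (pD_continuous _ _ _ _ _)
        continuous_snd continuous_const eCD
    · exact Continuous.if_le (pD_continuous _ _ _ _ _) (pD_continuous _ _ _ _ _)
        continuous_snd continuous_const eDD
    · intro q hq
      by_cases h : q.2 ≤ y1
      · simp only [if_pos h]; exact eAD q hq
      · simp only [if_neg h]; exact eBD q hq
  -- zero ordinate facts
  have z22 : B00 2 2 = 0 := hz00 2 (by norm_num) 2 (by norm_num)
  have z23 : B00 2 3 = 0 := hz00 2 (by norm_num) 3 (by norm_num)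
  have z32 : B00 3 2 = 0 := hz00 3 (by norm_num) 2 (by norm_num)
  have z33 : B00 3 3 = 0 := hz00 3 (by norm_num) 3 (by norm_num)
  have w20 : B01 2 0 = 0 := hz01 2 (by norm_num) 0 (by norm_num)
  have w30 : B01 3 0 = 0 := hz01 3 (by norm_num) 0 (by norm_num)
  have w21 : B01 2 1 = 0 := hz01 2 (by norm_num) 1 (by norm_num)
  have w31 : B01 3 1 = 0 := hz01 3 (by norm_num) 1 (by norm_num)
  have hX1 : ((x1:ℝ) - x0)/(x1 - x0) = 1 := div_self hxd
  have hY1 : ((y1:ℝ) - y0)/(y1 - y0) = 1 := div_self hyd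
  have hY0 : ((y1:ℝ) - y1)/(y2 - y1) = 0 := by simp
  have pfx0 : pFx B00 x0 x1 y0 y1 (x1, y1) = 0 := by
    unfold pFx
    simp [hX1, hY1, Finset.sum_range_succ, z23, z33]
  have pfy0 : pFy B00 x0 x1 y0 y1 (x1, y1) = 0 := by
    unfold pFy
    simp [hX1, hY1, Finset.sum_range_succ, z32, z33]
  have hv := hH (x1, y1)
  norm_num at hv
  refine ⟨?_, ?_, ?_, ?_, ?_⟩
  · rw [hbb]
    norm_num
    unfold pFun
    simp [hX1, hY1, Finset.sum_range_succ, z33]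
  · have hD1 : HasDerivAt (fun a => bbar (a, y1)) (pD B00 x0 x1 y0 y1 (x1, y1) (1, 0)) x1 :=
      by have := hv.comp_hasDerivAt x1 ((hasDerivAt_id' x1).prodMk (hasDerivAt_const x1 y1)); exact this
    rw [hD1.deriv]
    simp [pD, Dmap_apply, pfx0, pfy0]
  · have hD2 : HasDerivAt (fun a => bbar (x1, a)) (pD B00 x0 x1 y0 y1 (x1, y1) (0, 1)) y1 :=
      hv.comp_hasDerivAt y1 ((hasDerivAt_const y1 x1).prodMk (hasDerivAt_id y1))
    rw [hD2.deriv]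
    simp [pD, Dmap_apply, pfx0, pfy0]
  · -- mixed partial
    have hg : (fun a => deriv (fun a' => bbar (a', a)) x1) = fun a =>
        (if a ≤ y1 then pFx B00 x0 x1 y0 y1 (x1, a) else pFx B01 x0 x1 y1 y2 (x1, a)) := by
      funext a
      have hva := hH (x1, a)
      norm_num at hva
      have hD : HasDerivAt (fun a' => bbar (a', a))
          ((if a ≤ y1 then pD B00 x0 x1 y0 y1 (x1, a) else pD B01 x0 x1 y1 y2 (x1, a)) (1, 0))
          x1 :=
        by have := hva.comp_hasDerivAt x1 ((hasDerivAt_id' x1).prodMk (hasDerivAt_const x1 a)); exact this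
      rw [hD.deriv]
      by_cases hy : a ≤ y1 <;> simp [hy, pD, Dmap_apply]
    rw [hg]
    -- one-sided pieces
    have hφ0 : HasDerivAt (fun a => pFx B00 x0 x1 y0 y1 (x1, a)) 0 y1 := by
      have hsum : HasDerivAt (fun a => pFx B00 x0 x1 y0 y1 (x1, a))
          (∑ i ∈ Finset.range 4, ∑ j ∈ Finset.range 4,
            B00 i j * (dbern3 i ((x1 - x0)/(x1 - x0)) * (x1 - x0)⁻¹) *
              (dbern3 j ((y1 - y0)/(y1 - y0)) * (y1 - y0)⁻¹)) y1 := by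
        unfold pFx
        show HasDerivAt (fun a => ∑ i ∈ Finset.range 4, ∑ j ∈ Finset.range 4,
          B00 i j * (dbern3 i ((x1 - x0)/(x1 - x0)) * (x1 - x0)⁻¹) *
            bern3 j ((a - y0)/(y1 - y0))) _ y1
        refine HasDerivAt.fun_sum fun i hi => HasDerivAt.fun_sum fun j hj => ?_
        exact ((bern3_hasDerivAt j (Finset.mem_range.1 hj) _).comp y1
          (affine_hasDerivAt y0 y1 y1)).const_mul _
      convert hsum using 1
      simp [hX1, hY1, Finset.sum_range_succ, z22, z23, z32, z33]
    have hφ1 : HasDerivAt (fun a => pFx B01 x0 x1 y1 y2 (x1, a)) 0 y1 := by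
      have hsum : HasDerivAt (fun a => pFx B01 x0 x1 y1 y2 (x1, a))
          (∑ i ∈ Finset.range 4, ∑ j ∈ Finset.range 4,
            B01 i j * (dbern3 i ((x1 - x0)/(x1 - x0)) * (x1 - x0)⁻¹) *
              (dbern3 j ((y1 - y1)/(y2 - y1)) * (y2 - y1)⁻¹)) y1 := by
        unfold pFx
        show HasDerivAt (fun a => ∑ i ∈ Finset.range 4, ∑ j ∈ Finset.range 4,
          B01 i j * (dbern3 i ((x1 - x0)/(x1 - x0)) * (x1 - x0)⁻¹) *
            bern3 j ((a - y1)/(y2 - y1))) _ y1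
        refine HasDerivAt.fun_sum fun i hi => HasDerivAt.fun_sum fun j hj => ?_
        exact ((bern3_hasDerivAt j (Finset.mem_range.1 hj) _).comp y1
          (affine_hasDerivAt y1 y2 y1)).const_mul _
      convert hsum using 1
      simp [hX1, hY0, Finset.sum_range_succ, w20, w30, w21, w31]
    have hval0 : pFx B00 x0 x1 y0 y1 (x1, y1) = 0 := pfx0
    have hval1 : pFx B01 x0 x1 y1 y2 (x1, y1) = 0 := by
      unfold pFx
      simp [hX1, hY0, Finset.sum_range_succ, w20, w30]
    have hleft : HasDerivWithinAt (fun a =>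
        (if a ≤ y1 then pFx B00 x0 x1 y0 y1 (x1, a) else pFx B01 x0 x1 y1 y2 (x1, a)))
        0 (Set.Iic y1) y1 :=
      hφ0.hasDerivWithinAt.congr (fun a ha => if_pos ha) (if_pos le_rfl)
    have hright : HasDerivWithinAt (fun a =>
        (if a ≤ y1 then pFx B00 x0 x1 y0 y1 (x1, a) else pFx B01 x0 x1 y1 y2 (x1, a)))
        0 (Set.Ici y1) y1 := by
      refine hφ1.hasDerivWithinAt.congr (fun a ha => ?_) ?_
      · by_cases h : a ≤ y1
        · have : a = y1 := le_antisymm h ha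
          subst this
          rw [if_pos le_rfl, hval0, hval1]
        · rw [if_neg h]
      · rw [if_pos le_rfl, hval0, hval1]
    have := hleft.union hright
    rw [Set.Iic_union_Ici] at this
    rw [hasDerivWithinAt_univ] at this
    exact this.deriv
  · have hdiff : Differentiable ℝ bbar := fun p => (hH p).differentiableAt
    have hfd : Continuous (fderiv ℝ bbar) := by
      have : fderiv ℝ bbar = fun p =>
          if p.1 ≤ x1 then
            (if p.2 ≤ y1 then pD B00 x0 x1 y0 y1 p else pD B01 x0 x1 y1 y2 p)
          else
            (if p.2 ≤ y1 then pD B10 x1 x2 y0 y1 p else pD B11 x1 x2 y1 y2 p) :=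
        funext fun p => (hH p).fderiv
      rw [this]; exact hHcont
    exact (contDiff_one_iff_fderiv.mpr ⟨hdiff, hfd⟩).contDiffOn
end
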